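/- Let P be a linear operator on L²(μ) given by an integral kernel k(x,y) with respect to the measure μ, i.e., (Pf)(x) = ∫ k(x,y) f(y) dμ(y). If ∫∫ k(x,y) k(y,x) dμ(x) dμ(y) < ∞ and P is self-adjoint on L²(μ), then ∫∫ k(x,y)² dμ(x) dμ(y) < ∞, so P is a Hilbert–Schmidt operator. -/

import Mathlib

open MeasureTheory
open scoped ENNReal

section Aux

variable {X : Type*} [MeasurableSpace X] {μ : Measure X} [SigmaFinite μ]

private lemma aux_indicator_memℒp {A : Set X} (hA : MeasurableSet A) (hAfin : μ A < ∞) :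
    MemLp (A.indicator (fun _ => (1 : ℝ))) 2 μ :=
  memLp_indicator_const 2 hA 1 (Or.inr hAfin.ne)

end Aux

/-- If the integral operator `P f x = ∫ k(x,y) f(y) dμ(y)` on `L²(μ)` is self-adjoint and
`∫∫ k(x,y) k(y,x) dμ dμ < ∞`, then `∫∫ k(x,y)² dμ dμ < ∞`, i.e. `P` is Hilbert–Schmidt. -/
theorem stmt2 {X : Type*} [MeasurableSpace X] (μ : Measure X) [SigmaFinite μ]
    (k : X → X → ℝ) (hk : Measurable (Function.uncurry k))
    (hmix : Integrable (fun p : X × X => k p.1 p.2 * k p.2 p.1) (μ.prod μ))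
    (hdef : ∀ f : X → ℝ, MemLp f 2 μ → Integrable (fun p : X × X => k p.1 p.2 * f p.2) (μ.prod μ))
    (hsa : ∀ f g : X → ℝ, MemLp f 2 μ → MemLp g 2 μ →
      ∫ x, (∫ y, k x y * f y ∂μ) * g x ∂μ = ∫ x, f x * ∫ y, k x y * g y ∂μ ∂μ) :
    Integrable (fun p : X × X => (k p.1 p.2) ^ 2) (μ.prod μ) := by
  -- the kernel as a function on the product, and its "transpose"
  set K : X × X → ℝ := fun p => k p.1 p.2 with hK
  set K' : X × X → ℝ := fun p => k p.2 p.1 with hK'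
  have hKm : Measurable K := hk
  have hK'm : Measurable K' := hk.comp measurable_swap
  -- integrability of K on finite rectangles
  have hintK : ∀ {A B : Set X}, MeasurableSet A → μ A < ∞ → MeasurableSet B → μ B < ∞ →
      IntegrableOn K (B ×ˢ A) (μ.prod μ) := by
    intro A B hA hAfin hB hBfin
    have h1 : Integrable (fun p : X × X => k p.1 p.2 * (A.indicator (fun _ => (1:ℝ)) p.2))
        (μ.prod μ) := hdef _ (aux_indicator_memℒp hA hAfin)
    refine (h1.restrict (s := B ×ˢ A)).congr ?_
    filter_upwards [ae_restrict_mem ((hB.prod hA))] with p hp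
    simp [Set.indicator_of_mem hp.2, hK]
  -- integrability of K' on finite rectangles
  have hintK' : ∀ {A B : Set X}, MeasurableSet A → μ A < ∞ → MeasurableSet B → μ B < ∞ →
      IntegrableOn K' (B ×ˢ A) (μ.prod μ) := by
    intro A B hA hAfin hB hBfin
    have h1 : Integrable (fun p : X × X => k p.1 p.2 * (B.indicator (fun _ => (1:ℝ)) p.2))
        (μ.prod μ) := hdef _ (aux_indicator_memℒp hB hBfin)
    have h2 : Integrable ((fun p : X × X => k p.1 p.2 * (B.indicator (fun _ => (1:ℝ)) p.2))
        ∘ Prod.swap) (μ.prod μ) := by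
      rw [MeasurePreserving.integrable_comp_emb (Measure.measurePreserving_swap)
        ((MeasurableEquiv.prodComm : X × X ≃ᵐ X × X)).measurableEmbedding]
      exact h1
    refine (h2.restrict (s := B ×ˢ A)).congr ?_
    filter_upwards [ae_restrict_mem ((hB.prod hA))] with p hp
    simp [Set.indicator_of_mem hp.1, hK', Function.comp]
  -- the key identity: the integral of K - K' vanishes on finite rectangles
  have key : ∀ {A B : Set X}, MeasurableSet A → μ A < ∞ → MeasurableSet B → μ B < ∞ →
      ∫ p in B ×ˢ A, (K p - K' p) ∂(μ.prod μ) = 0 := by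
    intro A B hA hAfin hB hBfin
    have hiK := hintK hA hAfin hB hBfin
    have hiK' := hintK' hA hAfin hB hBfin
    rw [integral_sub hiK hiK', sub_eq_zero]
    -- LHS of hsa is ∫ over B ×ˢ A of K
    have e1 : ∫ x, (∫ y, k x y * (A.indicator (fun _ => (1:ℝ)) y) ∂μ) *
        (B.indicator (fun _ => (1:ℝ)) x) ∂μ = ∫ p in B ×ˢ A, K p ∂(μ.prod μ) := by
      rw [setIntegral_prod _ hiK]
      have : ∀ x, (∫ y, k x y * (A.indicator (fun _ => (1:ℝ)) y) ∂μ) *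
          (B.indicator (fun _ => (1:ℝ)) x) =
          B.indicator (fun x => ∫ y in A, k x y ∂μ) x := by
        intro x
        by_cases hx : x ∈ B
        · simp only [Set.indicator_of_mem hx, mul_one]
          rw [← integral_indicator hA]
          congr 1 with y
          by_cases hy : y ∈ A <;> simp [hy]
        · simp [Set.indicator_of_notMem hx]
      simp_rw [this]
      rw [integral_indicator hB]
    -- RHS of hsa is ∫ over A ×ˢ B of K, which is ∫ over B ×ˢ A of K'
    have e2 : ∫ x, (A.indicator (fun _ => (1:ℝ)) x) *
        (∫ y, k x y * (B.indicator (fun _ => (1:ℝ)) y) ∂μ) ∂μ =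
        ∫ p in B ×ˢ A, K' p ∂(μ.prod μ) := by
      have hiK2 := hintK hB hBfin hA hAfin
      have swapid : ∫ p in A ×ˢ B, K p ∂(μ.prod μ) = ∫ p in B ×ˢ A, K' p ∂(μ.prod μ) := by
        have hmp := Measure.measurePreserving_swap (μ := μ) (ν := μ)
        calc ∫ p in A ×ˢ B, K p ∂(μ.prod μ)
            = ∫ p in A ×ˢ B, K p ∂(Measure.map Prod.swap (μ.prod μ)) := by rw [hmp.map_eq]
          _ = ∫ p in Prod.swap ⁻¹' (A ×ˢ B), K (Prod.swap p) ∂(μ.prod μ) := by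
              rw [show (Prod.swap : X × X → X × X) =
                  ⇑(MeasurableEquiv.prodComm : X × X ≃ᵐ X × X) from rfl,
                ((MeasurableEquiv.prodComm : X × X ≃ᵐ X × X)).measurableEmbedding.setIntegral_map]
          _ = ∫ p in B ×ˢ A, K' p ∂(μ.prod μ) := by
              rw [Set.preimage_swap_prod]
              rfl
      rw [← swapid, setIntegral_prod _ hiK2]
      have : ∀ x, (A.indicator (fun _ => (1:ℝ)) x) *
          (∫ y, k x y * (B.indicator (fun _ => (1:ℝ)) y) ∂μ) =
          A.indicator (fun x => ∫ y in B, k x y ∂μ) x := by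
        intro x
        by_cases hx : x ∈ A
        · simp only [Set.indicator_of_mem hx, one_mul]
          rw [← integral_indicator hB]
          congr 1 with y
          by_cases hy : y ∈ B <;> simp [hy]
        · simp [Set.indicator_of_notMem hx]
      simp_rw [this]
      rw [integral_indicator hA]
    rw [← e1, ← e2]
    exact hsa _ _ (aux_indicator_memℒp hA hAfin) (aux_indicator_memℒp hB hBfin)
  -- deduce K = K' a.e.
  have hHm : Measurable (fun p : X × X => K p - K' p) := hKm.sub hK'm
  have hae : (fun p : X × X => K p - K' p) =ᵐ[μ.prod μ] 0 := by
    set H : X × X → ℝ := fun p => K p - K' p with hH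
    set S : ℕ → Set X := spanningSets μ with hS
    have hScov : ⋃ n, S n = Set.univ := iUnion_spanningSets μ
    have hSm : ∀ n, MeasurableSet (S n) := fun n => measurableSet_spanningSets μ n
    have hSfin : ∀ n, μ (S n) < ∞ := fun n => measure_spanningSets_lt_top μ n
    -- on each S n ×ˢ S n, H = 0 a.e.
    have hn : ∀ n, μ.prod μ ({p | H p ≠ 0} ∩ (S n ×ˢ S n)) = 0 := by
      intro n
      set ν : Measure (X × X) := (μ.prod μ).restrict (S n ×ˢ S n) with hν
      have hHint : Integrable H ν :=
        ((hintK (hSm n) (hSfin n) (hSm n) (hSfin n)).sub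
          (hintK' (hSm n) (hSfin n) (hSm n) (hSfin n)))
      have hfin1 : ∫⁻ p, ENNReal.ofReal (H p) ∂ν ≠ ∞ := by
        refine ne_of_lt (lt_of_le_of_lt ?_ hHint.2)
        refine lintegral_mono fun p => ?_
        rw [← ofReal_norm_eq_enorm]
        exact ENNReal.ofReal_le_ofReal (le_abs_self _)
      have hfin2 : ∫⁻ p, ENNReal.ofReal (-H p) ∂ν ≠ ∞ := by
        refine ne_of_lt (lt_of_le_of_lt ?_ hHint.2)
        refine lintegral_mono fun p => ?_
        rw [← ofReal_norm_eq_enorm]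
        exact ENNReal.ofReal_le_ofReal (neg_le_abs _)
      have hm1 : Measurable (fun p => ENNReal.ofReal (H p)) := hHm.ennreal_ofReal
      have hm2 : Measurable (fun p => ENNReal.ofReal (-H p)) := hHm.neg.ennreal_ofReal
      haveI i1 : IsFiniteMeasure (ν.withDensity (fun p => ENNReal.ofReal (H p))) :=
        isFiniteMeasure_withDensity hfin1
      haveI i2 : IsFiniteMeasure (ν.withDensity (fun p => ENNReal.ofReal (-H p))) :=
        isFiniteMeasure_withDensity hfin2
      -- the two densities yield the same measure, by checking on rectangles
      have hsetint : ∀ u : Set (X × X), MeasurableSet u → ∫ p in u, H p ∂ν = 0 →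
          ν.withDensity (fun p => ENNReal.ofReal (H p)) u =
          ν.withDensity (fun p => ENNReal.ofReal (-H p)) u := by
        intro u hu hint0
        rw [withDensity_apply _ hu, withDensity_apply _ hu]
        have hHu : Integrable H (ν.restrict u) := hHint.restrict
        have hrepr := integral_eq_lintegral_pos_part_sub_lintegral_neg_part hHu
        rw [hint0] at hrepr
        have h1 : ∫⁻ p in u, ENNReal.ofReal (H p) ∂ν ≠ ∞ :=
          ne_of_lt (lt_of_le_of_lt (setLIntegral_le_lintegral _ _) hfin1.lt_top)
        have h2 : ∫⁻ p in u, ENNReal.ofReal (-H p) ∂ν ≠ ∞ :=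
          ne_of_lt (lt_of_le_of_lt (setLIntegral_le_lintegral _ _) hfin2.lt_top)
        have := (sub_eq_zero.mp hrepr.symm)
        exact (ENNReal.toReal_eq_toReal_iff' h1 h2).mp this
      -- measures agree on rectangles, hence everywhere
      have hmeq : ν.withDensity (fun p => ENNReal.ofReal (H p)) =
          ν.withDensity (fun p => ENNReal.ofReal (-H p)) := by
        refine ext_of_generate_finite _ generateFrom_prod.symm isPiSystem_prod ?_ ?_
        · rintro u ⟨s, hs, t, ht, rfl⟩
          refine hsetint _ (hs.prod ht) ?_
          have hres : ν.restrict (s ×ˢ t) =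
              (μ.prod μ).restrict ((s ∩ S n) ×ˢ (t ∩ S n)) := by
            rw [hν, Measure.restrict_restrict (hs.prod ht), Set.prod_inter_prod]
          rw [show (∫ p in s ×ˢ t, H p ∂ν) = ∫ p, H p ∂(ν.restrict (s ×ˢ t)) from rfl, hres]
          exact key (ht.inter (hSm n)) (lt_of_le_of_lt (measure_mono Set.inter_subset_right)
            (hSfin n)) (hs.inter (hSm n)) (lt_of_le_of_lt (measure_mono Set.inter_subset_right)
            (hSfin n))
        · refine hsetint _ MeasurableSet.univ ?_
          have hres : ν.restrict Set.univ = (μ.prod μ).restrict (S n ×ˢ S n) := by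
            rw [Measure.restrict_univ]
          rw [show (∫ p in Set.univ, H p ∂ν) = ∫ p, H p ∂(ν.restrict Set.univ) from rfl, hres]
          exact key (hSm n) (hSfin n) (hSm n) (hSfin n)
      -- hence the densities agree a.e., so H = 0 a.e. on the rectangle
      have hdens : (fun p => ENNReal.ofReal (H p)) =ᵐ[ν] (fun p => ENNReal.ofReal (-H p)) :=
        (withDensity_eq_iff hm1.aemeasurable hm2.aemeasurable hfin1).mp hmeq
      have hH0 : H =ᵐ[ν] 0 := by
        filter_upwards [hdens] with p hp
        by_contra hne
        rcases lt_or_gt_of_ne hne with hlt | hgt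
        · have : ENNReal.ofReal (-H p) = 0 := by
            rw [← hp]; exact ENNReal.ofReal_eq_zero.mpr hlt.le
          rw [ENNReal.ofReal_eq_zero] at this
          simp only [Pi.zero_apply] at hlt
          linarith
        · have : ENNReal.ofReal (H p) = 0 := by
            rw [hp]
            simp only [Pi.zero_apply] at hgt
            exact ENNReal.ofReal_eq_zero.mpr (by linarith)
          rw [ENNReal.ofReal_eq_zero] at this
          simp only [Pi.zero_apply] at hgt
          linarith
      have : ν {p | H p ≠ 0} = 0 := ae_iff.mp hH0
      have hms : MeasurableSet {p : X × X | H p ≠ 0} := by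
        have : MeasurableSet (H ⁻¹' {0})ᶜ := (hHm (measurableSet_singleton 0)).compl
        simpa [Set.preimage, Set.compl_setOf] using this
      rwa [hν, Measure.restrict_apply hms] at this
    have hcov : {p : X × X | H p ≠ 0} ⊆ ⋃ n, ({p | H p ≠ 0} ∩ (S n ×ˢ S n)) := by
      intro p hp
      obtain ⟨n1, hn1⟩ : ∃ n, p.1 ∈ S n := by
        have : p.1 ∈ ⋃ n, S n := by rw [hScov]; trivial
        exact Set.mem_iUnion.mp this
      obtain ⟨n2, hn2⟩ : ∃ n, p.2 ∈ S n := by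
        have : p.2 ∈ ⋃ n, S n := by rw [hScov]; trivial
        exact Set.mem_iUnion.mp this
      refine Set.mem_iUnion.mpr ⟨max n1 n2, hp, ?_, ?_⟩
      · exact monotone_spanningSets μ (le_max_left n1 n2) hn1
      · exact monotone_spanningSets μ (le_max_right n1 n2) hn2
    have : μ.prod μ {p : X × X | H p ≠ 0} = 0 :=
      measure_mono_null hcov (measure_iUnion_null hn)
    exact this
  -- conclude: K' = K a.e., so K * K' = K ^ 2 a.e.
  refine hmix.congr ?_
  filter_upwards [hae] with p hp
  have : k p.2 p.1 = k p.1 p.2 := by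
    have := sub_eq_zero.mp (by simpa using hp)
    simpa [hK, hK'] using this.symm
  rw [this]; ring
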